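/- Let B ≥ 2 be an integer and n ≥ 1. Let U ⊆ ℝ^n be a nonempty compact convex set with set of extreme points V, and let h : U → ℝ be bounded above and barycentrically B-almost convex. Then sup_{x ∈ U} h(x) ≤ κ_B(n) + sup_{v ∈ V} h(v). -/

import Mathlib

open scoped BigOperators

/-- `κ_B(n) = ⌊log_B n⌋ + 1 + n/((B−1)·B^⌊log_B n⌋)`. -/
noncomputable def kappa (B n : ℕ) : ℝ :=
  (⌊Real.logb B n⌋ : ℝ) + 1 +
    (n : ℝ) / (((B : ℝ) - 1) * (B : ℝ) ^ ⌊Real.logb B n⌋)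

set_option linter.unusedSectionVars false

open Finset Module

namespace Stmt8Aux


lemma min_sub_min_mono {a a' c c' : ℝ} (haa : a ≤ a') (hcc : c ≤ c') :
    min a c' - min a c ≤ min a' c' - min a' c := by
  rcases min_cases a c' with ⟨h1, h1'⟩ | ⟨h1, h1'⟩ <;>
  rcases min_cases a c with ⟨h2, h2'⟩ | ⟨h2, h2'⟩ <;>
  rcases min_cases a' c' with ⟨h3, h3'⟩ | ⟨h3, h3'⟩ <;>
  rcases min_cases a' c with ⟨h4, h4'⟩ | ⟨h4, h4'⟩ <;> linarith

noncomputable def lamext (m : ℕ) (lam : Fin m → ℝ) (j : ℕ) : ℝ :=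
  if h : j < m then lam ⟨j, h⟩ else 0

noncomputable def cum (m : ℕ) (lam : Fin m → ℝ) (j : ℕ) : ℝ :=
  ∑ k ∈ Finset.range j, lamext m lam k

noncomputable def nu (m : ℕ) (lam : Fin m → ℝ) (a : ℝ) (j : ℕ) : ℝ :=
  min a (cum m lam (j + 1)) - min a (cum m lam j)

noncomputable def mu (B m : ℕ) (lam : Fin m → ℝ) (i j : ℕ) : ℝ :=
  nu m lam (((i : ℝ) + 1) / B) j - nu m lam ((i : ℝ) / B) j

variable {B m : ℕ} {lam : Fin m → ℝ}

section cumlem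
variable (h0 : ∀ j, 0 ≤ lam j) (h1 : ∑ j, lam j = 1)
include h0

lemma lamext_nonneg (j : ℕ) : 0 ≤ lamext m lam j := by
  unfold lamext; split <;> simp [h0 _]

lemma cum_mono : Monotone (cum m lam) := by
  intro a b hab
  exact Finset.sum_le_sum_of_subset_of_nonneg (Finset.range_subset_range.2 hab)
    (fun j _ _ => lamext_nonneg h0 j)

lemma cum_nonneg (j : ℕ) : 0 ≤ cum m lam j :=
  Finset.sum_nonneg fun k _ => lamext_nonneg h0 k

include h1 in
lemma cum_eq_one {j : ℕ} (hj : m ≤ j) : cum m lam j = 1 := by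
  have : cum m lam j = ∑ k ∈ Finset.range m, lamext m lam k := by
    refine (Finset.sum_subset (Finset.range_subset_range.2 hj) ?_).symm
    intro x _ hx
    simp only [Finset.mem_range, not_lt] at hx
    simp [lamext, Nat.not_lt.2 hx]
  rw [this, ← Fin.sum_univ_eq_sum_range (lamext m lam) m, ← h1]
  refine Finset.sum_congr rfl fun j _ => ?_
  simp [lamext, j.isLt]

include h1 in
lemma cum_le_one (j : ℕ) : cum m lam j ≤ 1 := by
  rcases le_or_gt m j with hj | hj
  · exact (cum_eq_one h0 h1 hj).le
  · calc cum m lam j ≤ cum m lam m := cum_mono h0 hj.le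
    _ = 1 := cum_eq_one h0 h1 le_rfl

lemma mu_nonneg (i j : ℕ) : 0 ≤ mu B m lam i j := by
  have h1 : (i : ℝ) / B ≤ ((i : ℝ) + 1) / B := by
    rcases Nat.eq_zero_or_pos B with hB | hB
    · simp [hB]
    · apply div_le_div_of_nonneg_right (by linarith) (by positivity)
  have h2 : cum m lam j ≤ cum m lam (j + 1) := cum_mono h0 (Nat.le_succ j)
  have := min_sub_min_mono h1 h2
  unfold mu nu; linarith

include h1 in
lemma sum_mu_i (hB : 0 < B) (j : Fin m) : ∑ i : Fin B, mu B m lam i j = lam j := by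
  have hcast : ∀ i : ℕ, mu B m lam i j =
      (fun i : ℕ => nu m lam ((i : ℝ) / B) j) (i + 1) - (fun i : ℕ => nu m lam ((i : ℝ) / B) j) i := by
    intro i; unfold mu; push_cast; ring_nf
  calc ∑ i : Fin B, mu B m lam i j = ∑ i ∈ Finset.range B, mu B m lam i j :=
        Fin.sum_univ_eq_sum_range (fun i => mu B m lam i j) B
    _ = nu m lam ((B : ℝ) / B) j - nu m lam ((0 : ℕ) : ℝ) j := by
        rw [Finset.sum_congr rfl fun i _ => hcast i, Finset.sum_range_sub
          (fun i : ℕ => nu m lam ((i : ℝ) / B) j) B]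
        norm_num
    _ = lam j := by
        rw [div_self (Nat.cast_ne_zero.mpr hB.ne' : (B : ℝ) ≠ 0)]
        unfold nu
        push_cast
        rw [min_eq_right (cum_le_one h0 h1 ((j : ℕ) + 1)), min_eq_right (cum_le_one h0 h1 j),
          min_eq_left (cum_nonneg h0 ((j : ℕ) + 1)), min_eq_left (cum_nonneg h0 (j : ℕ))]
        · have hrec : cum m lam ((j : ℕ) + 1) = cum m lam j + lamext m lam j :=
            Finset.sum_range_succ _ _
          rw [hrec]; simp [lamext, j.isLt]
        all_goals norm_num

include h1 in
lemma sum_mu_j {i : ℕ} (hi : i < B) : ∑ j : Fin m, mu B m lam i j = 1 / B := by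
  have hBpos : (0 : ℝ) < B := Nat.cast_pos.mpr (Nat.zero_lt_of_lt hi)
  have key : ∀ a : ℝ, 0 ≤ a → a ≤ 1 → ∑ j : Fin m, nu m lam a j = a := by
    intro a ha ha1
    calc ∑ j : Fin m, nu m lam a j = ∑ j ∈ Finset.range m, nu m lam a j :=
          Fin.sum_univ_eq_sum_range (nu m lam a) m
      _ = min a (cum m lam m) - min a (cum m lam 0) :=
          Finset.sum_range_sub (fun j => min a (cum m lam j)) m
      _ = a := by
          rw [cum_eq_one h0 h1 le_rfl]
          simp [cum, min_eq_left ha1, min_eq_right ha]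
  have hiB : (i : ℝ) ≤ B := by exact_mod_cast hi.le
  have hi1B : (i : ℝ) + 1 ≤ B := by exact_mod_cast hi
  unfold mu
  rw [Finset.sum_sub_distrib,
    key _ (div_nonneg (by positivity) hBpos.le) (by rw [div_le_one hBpos]; linarith),
    key _ (div_nonneg (Nat.cast_nonneg i) hBpos.le) (by rw [div_le_one hBpos]; linarith)]
  ring

include h1 in
lemma mu_le_lam (hB : 0 < B) (i : Fin B) (j : Fin m) : mu B m lam i j ≤ lam j := by
  rw [← sum_mu_i h0 h1 hB j]
  exact Finset.single_le_sum (f := fun i : Fin B => mu B m lam i j)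
    (fun i _ => mu_nonneg h0 i j) (Finset.mem_univ i)

end cumlem

lemma mu_upper {i j : ℕ} (h0 : ∀ j, 0 ≤ lam j) (hne : mu B m lam i j ≠ 0) :
    cum m lam j < ((i : ℝ) + 1) / B := by
  by_contra hc
  push_neg at hc
  apply hne
  have h2 : cum m lam j ≤ cum m lam (j + 1) := cum_mono h0 (Nat.le_succ j)
  have ha : (i : ℝ) / B ≤ ((i : ℝ) + 1) / B := by
    rcases Nat.eq_zero_or_pos B with hB | hB
    · simp [hB]
    · apply div_le_div_of_nonneg_right (by linarith) (by positivity)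
  unfold mu nu
  rw [min_eq_left (le_trans hc h2), min_eq_left hc,
    min_eq_left (le_trans ha (le_trans hc h2)), min_eq_left (le_trans ha hc)]
  ring

lemma mu_lower {i j : ℕ} (h0 : ∀ j, 0 ≤ lam j) (hne : mu B m lam i j ≠ 0) :
    (i : ℝ) / B < cum m lam (j + 1) := by
  by_contra hc
  push_neg at hc
  apply hne
  have h2 : cum m lam j ≤ cum m lam (j + 1) := cum_mono h0 (Nat.le_succ j)
  have ha : (i : ℝ) / B ≤ ((i : ℝ) + 1) / B := by
    rcases Nat.eq_zero_or_pos B with hB | hB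
    · simp [hB]
    · apply div_le_div_of_nonneg_right (by linarith) (by positivity)
  -- here cum (j+1) ≤ i/B ≤ (i+1)/B is false in general! (i+1)/B might be < cum(j+1)? no:
  -- cum(j+1) ≤ i/B and i/B ≤ (i+1)/B, so cum(j+1) ≤ (i+1)/B. mins pick cum.
  unfold mu nu
  rw [min_eq_right (le_trans hc ha), min_eq_right (le_trans (le_trans h2 hc) ha),
    min_eq_right hc, min_eq_right (le_trans h2 hc)]
  ring


section B
variable {B m : ℕ} {lam : Fin m → ℝ}

lemma count_lemma (hB : 0 < B) (h0 : ∀ j, 0 ≤ lam j) (h1 : ∑ j, lam j = 1)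
    (hne : ∀ i : Fin B, (Finset.univ.filter fun j : Fin m => mu B m lam i j ≠ 0).Nonempty) :
    ∑ i : Fin B, ((Finset.univ.filter fun j : Fin m => mu B m lam i j ≠ 0).card - 1)
      ≤ (Finset.univ.filter fun j : Fin m => lam j ≠ 0).card - 1 := by
  classical
  set si : Fin B → Finset (Fin m) :=
    fun i => Finset.univ.filter fun j => mu B m lam i j ≠ 0 with hsi
  set supp : Finset (Fin m) := Finset.univ.filter fun j => lam j ≠ 0 with hsupp
  have hmul : ∀ (i : Fin B) (j : Fin m), mu B m lam i j ≠ 0 → j ∈ supp := by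
    intro i j hmu
    have hle := mu_le_lam h0 h1 hB i j
    have hge := mu_nonneg (B := B) h0 (i : ℕ) (j : ℕ)
    simp only [hsupp, Finset.mem_filter, Finset.mem_univ, true_and]
    intro hl; rw [hl] at hle; exact hmu (le_antisymm hle hge)
  have hsuppne : supp.Nonempty := by
    obtain ⟨j, hj⟩ := hne ⟨0, hB⟩
    exact ⟨j, hmul _ _ (Finset.mem_filter.1 hj).2⟩
  set jstar := supp.min' hsuppne with hjstar
  set T : Fin B → Finset (Fin m) := fun i => (si i).erase ((si i).min' (hne i)) with hT
  have hcut : ∀ (i : Fin B) (j : Fin m), j ∈ T i →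
      (i : ℝ) / B < cum m lam (j : ℕ) ∧ cum m lam (j : ℕ) < ((i : ℝ) + 1) / B := by
    intro i j hj
    have hj1 : j ∈ si i := Finset.mem_of_mem_erase hj
    have hmin : (si i).min' (hne i) ∈ si i := Finset.min'_mem _ _
    have hlt : (si i).min' (hne i) < j :=
      lt_of_le_of_ne (Finset.min'_le _ _ hj1) (Ne.symm (Finset.ne_of_mem_erase hj))
    have hjm : mu B m lam i j ≠ 0 := (Finset.mem_filter.1 hj1).2
    have hminm : mu B m lam i (((si i).min' (hne i) : Fin m) : ℕ) ≠ 0 :=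
      (Finset.mem_filter.1 hmin).2
    refine ⟨?_, mu_upper h0 hjm⟩
    calc (i : ℝ) / B < cum m lam ((((si i).min' (hne i) : Fin m) : ℕ) + 1) := mu_lower h0 hminm
      _ ≤ cum m lam (j : ℕ) := cum_mono h0 (Nat.succ_le_of_lt hlt)
  have hdisj : ∀ i ∈ (Finset.univ : Finset (Fin B)), ∀ i' ∈ (Finset.univ : Finset (Fin B)),
      i ≠ i' → Disjoint (T i) (T i') := by
    intro i _ i' _ hii
    rw [Finset.disjoint_left]
    intro j hj hj'
    obtain ⟨h1l, h1u⟩ := hcut i j hj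
    obtain ⟨h2l, h2u⟩ := hcut i' j hj'
    have hBpos : (0 : ℝ) < B := Nat.cast_pos.mpr hB
    have hvne : (i : ℕ) ≠ (i' : ℕ) := fun hv => hii (Fin.ext hv)
    rcases lt_or_gt_of_ne hvne with hv | hv
    · have hc : ((i : ℕ) : ℝ) + 1 ≤ ((i' : ℕ) : ℝ) := by exact_mod_cast hv
      have := div_le_div_of_nonneg_right hc hBpos.le
      linarith
    · have hc : ((i' : ℕ) : ℝ) + 1 ≤ ((i : ℕ) : ℝ) := by exact_mod_cast hv
      have := div_le_div_of_nonneg_right hc hBpos.le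
      linarith
  have hsub : ∀ i : Fin B, T i ⊆ supp.erase jstar := by
    intro i j hj
    have hj1 : j ∈ si i := Finset.mem_of_mem_erase hj
    have hmem : j ∈ supp := hmul i j (Finset.mem_filter.1 hj1).2
    have hminsupp : (si i).min' (hne i) ∈ supp :=
      hmul i _ (Finset.mem_filter.1 (Finset.min'_mem (si i) (hne i))).2
    have hlt : (si i).min' (hne i) < j :=
      lt_of_le_of_ne (Finset.min'_le _ _ hj1) (Ne.symm (Finset.ne_of_mem_erase hj))
    have hjj : jstar < j := lt_of_le_of_lt (Finset.min'_le _ _ hminsupp) hlt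
    exact Finset.mem_erase.2 ⟨hjj.ne', hmem⟩
  calc ∑ i : Fin B, ((si i).card - 1) = ∑ i : Fin B, (T i).card := by
        refine Finset.sum_congr rfl fun i _ => ?_
        rw [hT]
        rw [Finset.card_erase_of_mem (Finset.min'_mem _ _)]
    _ = (Finset.univ.biUnion T).card := (Finset.card_biUnion hdisj).symm
    _ ≤ (supp.erase jstar).card :=
        Finset.card_le_card (Finset.biUnion_subset.2 fun i _ => hsub i)
    _ = supp.card - 1 := Finset.card_erase_of_mem (Finset.min'_mem _ _)

noncomputable def gfun (B : ℕ) (D : ℝ) (K t : ℕ) : ℝ :=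
  (∑ k ∈ Finset.range K, min 1 ((t : ℝ) / (B : ℝ) ^ k)) + D * min 1 ((t : ℝ) / (B : ℝ) ^ K)

lemma min_term_nonneg (B t k : ℕ) : (0:ℝ) ≤ min 1 ((t : ℝ) / (B : ℝ) ^ k) :=
  le_min zero_le_one (div_nonneg (Nat.cast_nonneg t) (by positivity))

lemma gfun_nonneg {D : ℝ} (hD : 0 ≤ D) (K t : ℕ) : 0 ≤ gfun B D K t :=
  add_nonneg (Finset.sum_nonneg fun k _ => min_term_nonneg B t k)
    (mul_nonneg hD (min_term_nonneg B t K))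

lemma superadd (hB : 0 < B) {D : ℝ} (hD : 0 ≤ D) (K t : ℕ) (ht : 1 ≤ t)
    (ts : Fin B → ℕ) (hts : ∑ i, ts i ≤ t) :
    1 + (1 / (B : ℝ)) * ∑ i, gfun B D K (ts i) ≤ gfun B D (K + 1) t := by
  have hBR : (0 : ℝ) < B := Nat.cast_pos.mpr hB
  have key : ∀ k : ℕ, (1 / (B : ℝ)) * ∑ i : Fin B, min 1 ((ts i : ℝ) / (B : ℝ) ^ k)
      ≤ min 1 ((t : ℝ) / (B : ℝ) ^ (k + 1)) := by
    intro k
    have hpk : (0 : ℝ) < (B : ℝ) ^ k := by positivity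
    have hb1 : ∑ i : Fin B, min 1 ((ts i : ℝ) / (B : ℝ) ^ k) ≤ (B : ℝ) := by
      calc ∑ i : Fin B, min 1 ((ts i : ℝ) / (B : ℝ) ^ k) ≤ ∑ _i : Fin B, (1:ℝ) :=
            Finset.sum_le_sum fun i _ => min_le_left _ _
        _ = (B : ℝ) := by simp
    have hb2 : ∑ i : Fin B, min 1 ((ts i : ℝ) / (B : ℝ) ^ k) ≤ (t : ℝ) / (B : ℝ) ^ k := by
      calc ∑ i : Fin B, min 1 ((ts i : ℝ) / (B : ℝ) ^ k)
          ≤ ∑ i : Fin B, (ts i : ℝ) / (B : ℝ) ^ k :=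
            Finset.sum_le_sum fun i _ => min_le_right _ _
        _ = (∑ i : Fin B, (ts i : ℝ)) / (B : ℝ) ^ k := by rw [Finset.sum_div]
        _ ≤ (t : ℝ) / (B : ℝ) ^ k := by
            apply div_le_div_of_nonneg_right ?_ hpk.le
            exact_mod_cast hts
    apply le_min
    · calc (1 / (B : ℝ)) * ∑ i : Fin B, min 1 ((ts i : ℝ) / (B : ℝ) ^ k)
          ≤ (1 / (B : ℝ)) * (B : ℝ) := by
            apply mul_le_mul_of_nonneg_left hb1 (by positivity)
        _ = 1 := by rw [one_div, inv_mul_cancel₀ hBR.ne']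
    · calc (1 / (B : ℝ)) * ∑ i : Fin B, min 1 ((ts i : ℝ) / (B : ℝ) ^ k)
          ≤ (1 / (B : ℝ)) * ((t : ℝ) / (B : ℝ) ^ k) := by
            apply mul_le_mul_of_nonneg_left hb2 (by positivity)
        _ = (t : ℝ) / (B : ℝ) ^ (k + 1) := by
            rw [pow_succ, div_mul_eq_div_div, one_div_mul_eq_div]
  set A : ℕ → ℝ := fun k => ∑ i : Fin B, min 1 ((ts i : ℝ) / (B : ℝ) ^ k) with hAdef
  have hA : ∑ i, gfun B D K (ts i) = (∑ k ∈ Finset.range K, A k) + D * A K := by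
    unfold gfun
    rw [Finset.sum_add_distrib, Finset.sum_comm, ← Finset.mul_sum]
  have hsum1 : (1 / (B : ℝ)) * ∑ i, gfun B D K (ts i)
      = (∑ k ∈ Finset.range K, (1 / (B : ℝ)) * A k)
        + D * ((1 / (B : ℝ)) * A K) := by
    rw [hA, mul_add, Finset.mul_sum]; ring
  have hrhs : gfun B D (K + 1) t
      = 1 + (∑ k ∈ Finset.range K, min 1 ((t : ℝ) / (B : ℝ) ^ (k + 1)))
        + D * min 1 ((t : ℝ) / (B : ℝ) ^ (K + 1)) := by
    unfold gfun
    rw [Finset.sum_range_succ']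
    have h0 : min 1 ((t : ℝ) / (B : ℝ) ^ 0) = 1 := by
      rw [pow_zero, div_one]
      exact min_eq_left (by exact_mod_cast ht)
    rw [h0]; ring
  rw [hsum1, hrhs]
  have hKs : ∑ k ∈ Finset.range K, (1 / (B : ℝ)) * A k
      ≤ ∑ k ∈ Finset.range K, min 1 ((t : ℝ) / (B : ℝ) ^ (k + 1)) :=
    Finset.sum_le_sum fun k _ => key k
  have hKD : D * ((1 / (B : ℝ)) * A K) ≤ D * min 1 ((t : ℝ) / (B : ℝ) ^ (K + 1)) :=
    mul_le_mul_of_nonneg_left (key K) hD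
  linarith


lemma gfun_def (B : ℕ) (D : ℝ) (K t : ℕ) : gfun B D K t =
    (∑ k ∈ Finset.range K, min 1 ((t : ℝ) / (B : ℝ) ^ k))
      + D * min 1 ((t : ℝ) / (B : ℝ) ^ K) := rfl

lemma gfun_zero_of_one_le {B : ℕ} {D : ℝ} (hD : 0 ≤ D) {t : ℕ} (ht : 1 ≤ t) :
    gfun B D 0 t = D := by
  unfold gfun
  rw [Finset.range_zero, Finset.sum_empty, pow_zero, div_one,
    min_eq_left (by exact_mod_cast ht : (1:ℝ) ≤ (t:ℝ)), mul_one, zero_add]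

end B

lemma vertex_case {E : Type*} [AddCommGroup E] [Module ℝ E]
    {V : Set E} {h : E → ℝ} {s : ℝ} (hs : ∀ v ∈ V, h v ≤ s)
    {m : ℕ} (v : Fin m → E) (hv : ∀ j, v j ∈ V) (lam : Fin m → ℝ)
    (h1 : ∑ j, lam j = 1)
    (hcard : (Finset.univ.filter fun j => lam j ≠ 0).card ≤ 1) :
    h (∑ j, lam j • v j) ≤ s := by
  classical
  set supp := Finset.univ.filter fun j => lam j ≠ 0 with hsupp
  have hne : supp.Nonempty := by
    rw [Finset.nonempty_iff_ne_empty]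
    intro hemp
    have hzero : ∑ j, lam j = 0 := by
      rw [← Finset.sum_filter_ne_zero Finset.univ, ← hsupp, hemp, Finset.sum_empty]
    rw [h1] at hzero; norm_num at hzero
  have hone : supp.card = 1 := le_antisymm hcard (Finset.card_pos.2 hne)
  obtain ⟨j0, hj0⟩ := Finset.card_eq_one.1 hone
  have hlz : ∀ b : Fin m, b ≠ j0 → lam b = 0 := by
    intro b hb
    by_contra hlb
    have : b ∈ supp := Finset.mem_filter.2 ⟨Finset.mem_univ b, hlb⟩
    rw [hj0, Finset.mem_singleton] at this; exact hb this
  have hsum : ∑ j, lam j • v j = lam j0 • v j0 :=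
    Finset.sum_eq_single j0 (fun b _ hb => by rw [hlz b hb, zero_smul])
      (fun hj => absurd (Finset.mem_univ j0) hj)
  have hl1 : lam j0 = 1 := by
    rw [← h1]
    exact (Finset.sum_eq_single j0 (fun b _ hb => hlz b hb)
      (fun hj => absurd (Finset.mem_univ j0) hj)).symm
  rw [hsum, hl1, one_smul]
  exact hs (v j0) (hv j0)

lemma main_ind {E : Type*} [AddCommGroup E] [Module ℝ E] {B : ℕ} (hB : 2 ≤ B)
    {U V : Set E} (hUconv : Convex ℝ U) (hVU : V ⊆ U) {h : E → ℝ} {s D : ℝ}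
    (hs : ∀ v ∈ V, h v ≤ s) (hSD : ∀ x ∈ U, h x ≤ s + D) (hD : 0 ≤ D)
    (hac : ∀ y : Fin B → E, (∀ i, y i ∈ U) →
      h ((B : ℝ)⁻¹ • ∑ i, y i) ≤ 1 + (1 / (B : ℝ)) * ∑ i, h (y i)) :
    ∀ (K t m : ℕ) (v : Fin m → E), (∀ j, v j ∈ V) → ∀ lam : Fin m → ℝ,
      (∀ j, 0 ≤ lam j) → (∑ j, lam j = 1) →
      (Finset.univ.filter fun j => lam j ≠ 0).card ≤ t + 1 →
      h (∑ j, lam j • v j) ≤ s + gfun B D K t := by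
  classical
  have hB0 : 0 < B := by omega
  have hBR : (0 : ℝ) < B := Nat.cast_pos.mpr hB0
  intro K
  induction K with
  | zero =>
    intro t m v hv lam h0 h1 hcard
    rcases le_or_gt (Finset.univ.filter fun j => lam j ≠ 0).card 1 with hc | hc
    · exact le_trans (vertex_case hs v hv lam h1 hc)
        (le_add_of_nonneg_right (gfun_nonneg hD 0 t))
    · have ht : 1 ≤ t := by omega
      have hx : (∑ j, lam j • v j) ∈ U :=
        hUconv.sum_mem (fun j _ => h0 j) h1 (fun j _ => hVU (hv j))
      calc h (∑ j, lam j • v j) ≤ s + D := hSD _ hx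
        _ = s + gfun B D 0 t := by rw [gfun_zero_of_one_le hD ht]
  | succ K IH =>
    intro t m v hv lam h0 h1 hcard
    rcases le_or_gt (Finset.univ.filter fun j => lam j ≠ 0).card 1 with hc | hc
    · exact le_trans (vertex_case hs v hv lam h1 hc)
        (le_add_of_nonneg_right (gfun_nonneg hD (K + 1) t))
    · have ht : 1 ≤ t := by omega
      have hsine : ∀ i : Fin B,
          (Finset.univ.filter fun j : Fin m => mu B m lam i j ≠ 0).Nonempty := by
        intro i
        rw [Finset.nonempty_iff_ne_empty]
        intro hemp
        have hzero : ∑ j : Fin m, mu B m lam (i : ℕ) (j : ℕ) = 0 := by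
          rw [← Finset.sum_filter_ne_zero Finset.univ, hemp, Finset.sum_empty]
        rw [sum_mu_j h0 h1 i.isLt] at hzero
        have : (1 : ℝ) / B ≠ 0 := by positivity
        exact this hzero
      set y : Fin B → E := fun i => ∑ j : Fin m, ((B : ℝ) * mu B m lam i j) • v j with hy
      have hchw0 : ∀ (i : Fin B) (j : Fin m), 0 ≤ (B : ℝ) * mu B m lam i j :=
        fun i j => mul_nonneg hBR.le (mu_nonneg h0 _ _)
      have hchw1 : ∀ i : Fin B, ∑ j : Fin m, (B : ℝ) * mu B m lam i j = 1 := by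
        intro i
        rw [← Finset.mul_sum, sum_mu_j h0 h1 i.isLt]
        field_simp
      have hyU : ∀ i, y i ∈ U := fun i =>
        hUconv.sum_mem (fun j _ => hchw0 i j) (hchw1 i) (fun j _ => hVU (hv j))
      have hxy : (B : ℝ)⁻¹ • ∑ i, y i = ∑ j, lam j • v j := by
        have h1' : ∑ i, y i = ∑ j, ((B : ℝ) * lam j) • v j := by
          rw [hy]
          rw [Finset.sum_comm]
          refine Finset.sum_congr rfl fun j _ => ?_
          rw [← Finset.sum_smul, ← Finset.mul_sum, sum_mu_i h0 h1 hB0 j]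
        rw [h1', Finset.smul_sum]
        refine Finset.sum_congr rfl fun j _ => ?_
        rw [smul_smul, ← mul_assoc, inv_mul_cancel₀ hBR.ne', one_mul]
      have happ := hac y hyU
      rw [hxy] at happ
      set ts : Fin B → ℕ :=
        fun i => (Finset.univ.filter fun j : Fin m => mu B m lam i j ≠ 0).card - 1 with hts
      have hchild : ∀ i : Fin B, h (y i) ≤ s + gfun B D K (ts i) := by
        intro i
        have hfeq : (Finset.univ.filter fun j : Fin m => (B : ℝ) * mu B m lam i j ≠ 0)
            = Finset.univ.filter fun j : Fin m => mu B m lam i j ≠ 0 := by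
          refine Finset.filter_congr fun j _ => ?_
          simp [mul_ne_zero_iff, hBR.ne']
        have hcardi : 1 ≤ (Finset.univ.filter fun j : Fin m => mu B m lam i j ≠ 0).card :=
          Finset.card_pos.2 (hsine i)
        refine IH (ts i) m v hv (fun j => (B : ℝ) * mu B m lam i j)
          (hchw0 i) (hchw1 i) ?_
        simp only [hfeq, hts]
        omega
      have hsumts : ∑ i : Fin B, ts i ≤ t := by
        have hcl := count_lemma hB0 h0 h1 hsine
        simp only [hts]
        omega
      calc h (∑ j, lam j • v j) ≤ 1 + (1 / (B : ℝ)) * ∑ i, h (y i) := happ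
        _ ≤ 1 + (1 / (B : ℝ)) * ∑ i, (s + gfun B D K (ts i)) := by
            have := Finset.sum_le_sum (fun i (_ : i ∈ Finset.univ) => hchild i)
            have hm := mul_le_mul_of_nonneg_left this (le_of_lt (by positivity : (0:ℝ) < 1 / B))
            linarith
        _ = s + (1 + (1 / (B : ℝ)) * ∑ i, gfun B D K (ts i)) := by
            rw [Finset.sum_add_distrib, Finset.sum_const, Finset.card_univ, Fintype.card_fin]
            rw [nsmul_eq_mul, mul_add]
            have : (1 / (B : ℝ)) * ((B : ℝ) * s) = s := by field_simp
            rw [this]; ring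
        _ ≤ s + gfun B D (K + 1) t := by
            have := superadd hB0 hD K t ht ts hsumts
            linarith


universe u


/-- Statement of Minkowski's theorem, graded by ambient dimension. -/
abbrev MinkStmt (d : ℕ) : Prop :=
  ∀ (E : Type u) [NormedAddCommGroup E] [NormedSpace ℝ E] [FiniteDimensional ℝ E],
    finrank ℝ E ≤ d → ∀ U : Set E, IsCompact U → Convex ℝ U →
      U ⊆ convexHull ℝ (U.extremePoints ℝ)

lemma subsingleton_case {E : Type u} [NormedAddCommGroup E] [NormedSpace ℝ E]
    (hsub : Subsingleton E) (U : Set E) : U ⊆ convexHull ℝ (U.extremePoints ℝ) := by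
  intro x hx
  apply subset_convexHull
  refine mem_extremePoints.2 ⟨hx, ?_⟩
  intro x₁ _ x₂ _ _
  exact ⟨Subsingleton.elim _ _, Subsingleton.elim _ _⟩

lemma red (d : ℕ) (IH : MinkStmt.{u} d) {E : Type u} [NormedAddCommGroup E]
    [NormedSpace ℝ E] [FiniteDimensional ℝ E] (U : Set E) (hcp : IsCompact U)
    (hconv : Convex ℝ U) (hd : finrank ℝ (vectorSpan ℝ U) ≤ d) :
    U ⊆ convexHull ℝ (U.extremePoints ℝ) := by
  rcases U.eq_empty_or_nonempty with rfl | ⟨a₀, ha₀⟩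
  · simp
  set W := vectorSpan ℝ U with hW
  set φ : W →ᵃ[ℝ] E := AffineMap.mk' (fun w : W => (w : E) + a₀) W.subtype 0
    (by intro p; simp) with hφ
  have hφfun : ∀ w : W, φ w = (w : E) + a₀ := fun w => rfl
  have hφcont : Continuous φ := by
    have : (⇑φ : W → E) = fun w : W => (w : E) + a₀ := rfl
    rw [this]
    exact continuous_subtype_val.add continuous_const
  have hinj : Function.Injective φ := by
    intro a b hab
    rw [hφfun, hφfun] at hab
    exact Subtype.coe_injective (by simpa using hab)
  set Uw : Set W := (⇑φ) ⁻¹' U with hUw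
  have himg : φ '' Uw = U := by
    apply Set.Subset.antisymm (Set.image_preimage_subset _ _)
    intro u hu
    refine ⟨⟨u - a₀, ?_⟩, ?_, ?_⟩
    · exact vsub_mem_vectorSpan ℝ hu ha₀
    · show φ _ ∈ U
      rw [hφfun]
      simpa using hu
    · rw [hφfun]; simp
  have hUwcp : IsCompact Uw := by
    apply Metric.isCompact_of_isClosed_isBounded
    · exact hcp.isClosed.preimage hφcont
    · obtain ⟨r, hr⟩ := (Metric.isBounded_iff_subset_closedBall a₀).1 hcp.isBounded
      apply Bornology.IsBounded.subset (Metric.isBounded_closedBall (x := (0 : W)) (r := r))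
      intro w hw
      have : φ w ∈ U := hw
      have hd2 := hr this
      rw [Metric.mem_closedBall] at hd2 ⊢
      rw [hφfun] at hd2
      rw [dist_eq_norm] at hd2 ⊢
      simpa using hd2
  have hUwconv : Convex ℝ Uw := hconv.affine_preimage φ
  have hUwd : finrank ℝ W ≤ d := hd
  have h1 : Uw ⊆ convexHull ℝ (Uw.extremePoints ℝ) := IH W hUwd Uw hUwcp hUwconv
  intro u hu
  rw [← himg] at hu
  obtain ⟨w, hw, rfl⟩ := hu
  have h2 : φ w ∈ φ '' convexHull ℝ (Uw.extremePoints ℝ) := Set.mem_image_of_mem _ (h1 hw)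
  rw [AffineMap.image_convexHull] at h2
  refine convexHull_mono ?_ h2
  intro z hz
  obtain ⟨xw, hxw, rfl⟩ := hz
  have hUeq : U = φ '' Uw := himg.symm
  rw [hUeq]
  refine mem_extremePoints.2 ⟨Set.mem_image_of_mem _ hxw.1, ?_⟩
  rintro y ⟨y', hy', rfl⟩ z ⟨z', hz', rfl⟩ hseg
  rw [← image_openSegment] at hseg
  obtain ⟨xx, hxx, hxeq⟩ := hseg
  have hxxeq : xx = xw := hinj hxeq
  rw [hxxeq] at hxx
  obtain ⟨he1, he2⟩ := (mem_extremePoints.1 hxw).2 y' hy' z' hz' hxx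
  exact ⟨by rw [he1], by rw [he2]⟩

lemma mink : ∀ d : ℕ, MinkStmt.{u} d := by
  intro d
  induction d with
  | zero =>
    intro E _ _ _ hd U hcp hconv
    have : Subsingleton E := by
      have h0 : finrank ℝ E = 0 := Nat.le_zero.1 hd
      exact finrank_zero_iff.1 h0
    exact subsingleton_case this U
  | succ d IH =>
    intro E _ _ _ hd U hcp hconv
    by_cases hsp : affineSpan ℝ U = ⊤
    · -- interior is nonempty
      have hUne : U.Nonempty := by
        rcases U.eq_empty_or_nonempty with rfl | h
        · exfalso
          rw [AffineSubspace.span_empty] at hsp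
          have h0 : (0 : E) ∈ (⊥ : AffineSubspace ℝ E) := by
            rw [hsp]; exact AffineSubspace.mem_top ℝ E 0
          rw [← AffineSubspace.mem_coe, AffineSubspace.bot_coe] at h0
          exact h0
        · exact h
      have hint : (interior U).Nonempty :=
        (hconv.interior_nonempty_iff_affineSpan_eq_top).2 hsp
      obtain ⟨w, hw⟩ := hint
      -- boundary points are in the hull of extreme points
      have hbd : ∀ p ∈ U, p ∉ interior U → p ∈ convexHull ℝ (U.extremePoints ℝ) := by
        intro p hp hpint
        obtain ⟨f, hf⟩ := geometric_hahn_banach_open_point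
          (hconv.interior (𝕜 := ℝ)) isOpen_interior hpint
        have hfle : ∀ z ∈ U, f z ≤ f p := by
          intro z hz
          have hcont : Filter.Tendsto (fun tt : ℝ => f ((1 - tt) • z + tt • w))
              (nhdsWithin 0 (Set.Ioi 0)) (nhds (f z)) := by
            have hc : Continuous fun tt : ℝ => f ((1 - tt) • z + tt • w) := by
              apply f.continuous.comp
              exact (((continuous_const.sub continuous_id).smul continuous_const).add
                (continuous_id.smul continuous_const))
            have h0 : f ((1 - (0:ℝ)) • z + (0:ℝ) • w) = f z := by norm_num
            have := (hc.tendsto 0).mono_left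
              (nhdsWithin_le_nhds (s := Set.Ioi (0:ℝ)))
            rwa [h0] at this
          refine le_of_tendsto hcont ?_
          filter_upwards [Ioo_mem_nhdsGT_of_mem
            (Set.mem_Ico.2 ⟨le_refl (0:ℝ), zero_lt_one⟩)] with tt htt
          have hin : (1 - tt) • z + tt • w ∈ interior U :=
            hconv.combo_closure_interior_mem_interior (subset_closure hz) hw
              (by linarith [htt.2]) htt.1 (by ring)
          exact (hf _ hin).le
        set F := {z ∈ U | f z = f p} with hFdef
        have hpF : p ∈ F := ⟨hp, rfl⟩
        have hFsub : F ⊆ U := fun z hz => hz.1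
        have hFcl : IsClosed F := by
          have : F = U ∩ f ⁻¹' {f p} := by
            ext z; simp [hFdef, Set.mem_preimage]
          rw [this]
          exact hcp.isClosed.inter (IsClosed.preimage f.continuous isClosed_singleton)
        have hFcp : IsCompact F := hcp.of_isClosed_subset hFcl hFsub
        have hFconv : Convex ℝ F := by
          intro z1 hz1 z2 hz2 aa bb haa hbb hab
          refine ⟨hconv hz1.1 hz2.1 haa hbb hab, ?_⟩
          rw [map_add, map_smul, map_smul, hz1.2, hz2.2, smul_eq_mul, smul_eq_mul,
            ← add_mul, hab, one_mul]
        have hexp : IsExposed ℝ U F := by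
          intro _
          refine ⟨f, ?_⟩
          ext z
          constructor
          · rintro ⟨hz, hze⟩
            exact ⟨hz, fun y hy => (hfle y hy).trans hze.ge⟩
          · rintro ⟨hz, hzm⟩
            exact ⟨hz, le_antisymm (hfle z hz) (hzm p hp)⟩
        have hext : IsExtreme ℝ U F := hexp.isExtreme
        have hker : vectorSpan ℝ F ≤ LinearMap.ker (f : E →ₗ[ℝ] ℝ) := by
          rw [vectorSpan_def]
          apply Submodule.span_le.2
          rintro x hx
          rw [Set.mem_vsub] at hx
          obtain ⟨u1, hu1, u2, hu2, rfl⟩ := hx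
          rw [SetLike.mem_coe, LinearMap.mem_ker]
          have : (u1 : E) -ᵥ u2 = u1 - u2 := rfl
          rw [this, map_sub]
          simp only [ContinuousLinearMap.coe_coe]
          rw [hu1.2, hu2.2, sub_self]
        have hfne : LinearMap.ker (f : E →ₗ[ℝ] ℝ) ≠ ⊤ := by
          intro hk
          have hwp : f w < f p := hf w hw
          have h1 : f (p - w) = 0 := by
            have : p - w ∈ LinearMap.ker (f : E →ₗ[ℝ] ℝ) := hk ▸ Submodule.mem_top
            exact LinearMap.mem_ker.1 this
          rw [map_sub] at h1
          linarith
        have hdimF : finrank ℝ (vectorSpan ℝ F) ≤ d := by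
          have h1 : finrank ℝ (LinearMap.ker (f : E →ₗ[ℝ] ℝ)) < finrank ℝ E :=
            Submodule.finrank_lt hfne
          have h2 : finrank ℝ (vectorSpan ℝ F) ≤
              finrank ℝ (LinearMap.ker (f : E →ₗ[ℝ] ℝ)) := Submodule.finrank_mono hker
          omega
        have hFhull : F ⊆ convexHull ℝ (F.extremePoints ℝ) := red d IH F hFcp hFconv hdimF
        exact convexHull_mono (hext.extremePoints_subset_extremePoints) (hFhull hpF)
      intro x hx
      by_cases hxint : x ∈ interior U
      · rcases subsingleton_or_nontrivial E with hss | hnt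
        · exact subsingleton_case hss U hx
        obtain ⟨v, hv⟩ := exists_ne (0 : E)
        have hvn : (0:ℝ) < ‖v‖ := norm_pos_iff.2 hv
        set T := {tt : ℝ | x + tt • v ∈ U} with hT
        have hTcl : IsClosed T := by
          have : T = (fun tt : ℝ => x + tt • v) ⁻¹' U := rfl
          rw [this]
          exact hcp.isClosed.preimage (continuous_const.add (continuous_id.smul continuous_const))
        have hTbd : Bornology.IsBounded T := by
          obtain ⟨r, hr⟩ := (Metric.isBounded_iff_subset_closedBall x).1 hcp.isBounded
          apply Bornology.IsBounded.subset (Metric.isBounded_closedBall (x := (0:ℝ)) (r := r / ‖v‖))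
          intro tt htt
          have h1 : x + tt • v ∈ U := htt
          have h2 := hr h1
          rw [Metric.mem_closedBall, dist_eq_norm] at h2 ⊢
          have h3 : ‖x + tt • v - x‖ = |tt| * ‖v‖ := by
            rw [add_sub_cancel_left, norm_smul, Real.norm_eq_abs]
          rw [h3] at h2
          rw [sub_zero, Real.norm_eq_abs]
          rw [le_div_iff₀ hvn]
          exact h2
        have hT0 : (0:ℝ) ∈ T := by simp [hT, hx]
        have hTne : T.Nonempty := ⟨0, hT0⟩
        have hTbb : BddBelow T := hTbd.bddBelow
        have hTba : BddAbove T := hTbd.bddAbove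
        set a := sInf T with ha
        set b := sSup T with hb
        have haT : a ∈ T := hTcl.csInf_mem hTne hTbb
        have hbT : b ∈ T := hTcl.csSup_mem hTne hTba
        obtain ⟨ε, hε, hball⟩ := Metric.isOpen_iff.1 isOpen_interior x hxint
        have hmem : ∀ tt : ℝ, |tt| * ‖v‖ < ε → tt ∈ T := by
          intro tt htt
          have : x + tt • v ∈ Metric.ball x ε := by
            rw [Metric.mem_ball, dist_eq_norm, add_sub_cancel_left, norm_smul,
              Real.norm_eq_abs]
            exact htt
          show x + tt • v ∈ U
          exact interior_subset (hball this)
        set t₀ := ε / (2 * ‖v‖) with ht₀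
        have ht₀pos : 0 < t₀ := by positivity
        have ht₀mem : ∀ s : ℝ, |s| = t₀ → s ∈ T := by
          intro s hs
          apply hmem
          rw [hs, ht₀]
          rw [div_mul_eq_mul_div, div_lt_iff₀ (by positivity : (0:ℝ) < 2 * ‖v‖)]
          nlinarith
        have hat : a ≤ -t₀ := csInf_le hTbb (ht₀mem _ (by rw [abs_neg, abs_of_pos ht₀pos]))
        have hbt : t₀ ≤ b := le_csSup hTba (ht₀mem _ (abs_of_pos ht₀pos))
        have haneg : a < 0 := lt_of_le_of_lt hat (by linarith)
        have hbpos : 0 < b := lt_of_lt_of_le ht₀pos hbt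
        set p := x + a • v with hpdef
        set q := x + b • v with hqdef
        have hpU : p ∈ U := haT
        have hqU : q ∈ U := hbT
        have hpni : p ∉ interior U := by
          intro hpin
          obtain ⟨ε', hε', hball'⟩ := Metric.isOpen_iff.1 isOpen_interior p hpin
          set δ := ε' / (2 * ‖v‖) with hδ
          have hδpos : 0 < δ := by positivity
          have : a - δ ∈ T := by
            have : x + (a - δ) • v ∈ Metric.ball p ε' := by
              rw [Metric.mem_ball, dist_eq_norm, hpdef]
              have : x + (a - δ) • v - (x + a • v) = (-δ) • v := by
                rw [sub_smul]; module
              rw [this, norm_smul, Real.norm_eq_abs, abs_neg, abs_of_pos hδpos, hδ]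
              rw [div_mul_eq_mul_div, div_lt_iff₀ (by positivity : (0:ℝ) < 2 * ‖v‖)]
              nlinarith
            show x + (a - δ) • v ∈ U
            exact interior_subset (hball' this)
          have := csInf_le hTbb this
          rw [← ha] at this
          linarith
        have hqni : q ∉ interior U := by
          intro hqin
          obtain ⟨ε', hε', hball'⟩ := Metric.isOpen_iff.1 isOpen_interior q hqin
          set δ := ε' / (2 * ‖v‖) with hδ
          have hδpos : 0 < δ := by positivity
          have : b + δ ∈ T := by
            have : x + (b + δ) • v ∈ Metric.ball q ε' := by
              rw [Metric.mem_ball, dist_eq_norm, hqdef]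
              have : x + (b + δ) • v - (x + b • v) = δ • v := by
                rw [add_smul]; module
              rw [this, norm_smul, Real.norm_eq_abs, abs_of_pos hδpos, hδ]
              rw [div_mul_eq_mul_div, div_lt_iff₀ (by positivity : (0:ℝ) < 2 * ‖v‖)]
              nlinarith
            show x + (b + δ) • v ∈ U
            exact interior_subset (hball' this)
          have := le_csSup hTba this
          rw [← hb] at this
          linarith
        have hphull := hbd p hpU hpni
        have hqhull := hbd q hqU hqni
        set c1 := b / (b - a) with hc1
        set c2 := -a / (b - a) with hc2
        have hba : 0 < b - a := by linarith
        have hc1n : 0 ≤ c1 := by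
          rw [hc1]; exact div_nonneg hbpos.le hba.le
        have hc2n : 0 ≤ c2 := by
          rw [hc2]; exact div_nonneg (by linarith) hba.le
        have hc12 : c1 + c2 = 1 := by
          rw [hc1, hc2, ← add_div, ← sub_eq_add_neg]
          exact div_self hba.ne'
        have hxc : c1 • p + c2 • q = x := by
          rw [hpdef, hqdef]
          have hexp : c1 • (x + a • v) + c2 • (x + b • v)
              = (c1 + c2) • x + (c1 * a + c2 * b) • v := by
            rw [smul_add, smul_add, smul_smul, smul_smul, add_smul, add_smul]
            abel
          rw [hexp, hc12, one_smul]
          have : c1 * a + c2 * b = 0 := by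
            rw [hc1, hc2]
            field_simp
            ring
          rw [this, zero_smul, add_zero]
        rw [← hxc]
        exact (convex_convexHull ℝ _) hphull hqhull hc1n hc2n hc12
      · exact hbd x hx hxint
    · -- proper affine span: reduce dimension
      rcases U.eq_empty_or_nonempty with rfl | hUne
      · simp
      have hdir : (affineSpan ℝ U).direction ≠ ⊤ := by
        intro hdt
        exact hsp ((AffineSubspace.direction_eq_top_iff_of_nonempty
          ((affineSpan_nonempty ℝ).2 hUne)).1 hdt)
      have hlt : finrank ℝ (vectorSpan ℝ U) < finrank ℝ E := by
        rw [← direction_affineSpan]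
        exact Submodule.finrank_lt hdir
      exact red d IH U hcp hconv (by omega)


end Stmt8Aux

open Stmt8Aux

theorem stmt8 (B n : ℕ) (hB : 2 ≤ B) (hn : 1 ≤ n)
    (U : Set (Fin n → ℝ)) (hUne : U.Nonempty) (hUcp : IsCompact U)
    (hUconv : Convex ℝ U) (h : (Fin n → ℝ) → ℝ)
    (hbdd : ∃ M : ℝ, ∀ x ∈ U, h x ≤ M)
    (hac : ∀ y : Fin B → (Fin n → ℝ), (∀ i, y i ∈ U) →
      h ((B : ℝ)⁻¹ • ∑ i, y i) ≤ 1 + (1 / (B : ℝ)) * ∑ i, h (y i)) :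
    sSup (h '' U) ≤ kappa B n + sSup (h '' Set.extremePoints ℝ U) := by
  classical
  obtain ⟨M, hM⟩ := hbdd
  set V' := Set.extremePoints ℝ U with hV'
  have hVU : V' ⊆ U := extremePoints_subset
  have hVne : V'.Nonempty := hUcp.extremePoints_nonempty hUne
  have hbddU : BddAbove (h '' U) := ⟨M, by rintro _ ⟨x, hx, rfl⟩; exact hM x hx⟩
  have hbddV : BddAbove (h '' V') := ⟨M, by rintro _ ⟨x, hx, rfl⟩; exact hM x (hVU hx)⟩
  set s := sSup (h '' V') with hsdef
  set S := sSup (h '' U) with hSdef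
  have hs : ∀ v ∈ V', h v ≤ s := fun v hv => le_csSup hbddV ⟨v, hv, rfl⟩
  have hsS : s ≤ S := csSup_le_csSup hbddU (hVne.image h) (Set.image_mono hVU)
  set D := S - s with hDdef
  have hD0 : 0 ≤ D := by simp [hDdef]; linarith
  have hSD : ∀ x ∈ U, h x ≤ s + D := by
    intro x hx
    have := le_csSup hbddU (Set.mem_image_of_mem h hx)
    rw [hDdef]; linarith
  have hmink : U ⊆ convexHull ℝ V' :=
    mink (finrank ℝ (Fin n → ℝ)) (Fin n → ℝ) le_rfl U hUcp hUconv
  have hkey : ∀ K : ℕ, S ≤ s + gfun B D K n := by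
    intro K
    apply csSup_le (hUne.image h)
    rintro _ ⟨x, hx, rfl⟩
    obtain ⟨ι, hι, z, wgt, hzran, haff, hwpos, hwsum, hwrep⟩ :=
      eq_pos_convex_span_of_mem_convexHull (hmink hx)
    letI := hι
    set m := Fintype.card ι with hm
    set e := Fintype.equivFin ι with he
    set v : Fin m → (Fin n → ℝ) := fun j => z (e.symm j) with hv
    set lam : Fin m → ℝ := fun j => wgt (e.symm j) with hlam
    have hvmem : ∀ j, v j ∈ V' := fun j => hzran (Set.mem_range_self _)
    have h0 : ∀ j, 0 ≤ lam j := fun j => (hwpos _).le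
    have h1 : ∑ j, lam j = 1 := by
      rw [hlam, ← hwsum]
      simpa using Equiv.sum_comp e.symm wgt
    have hrep : ∑ j, lam j • v j = x := by
      rw [hlam, hv, ← hwrep]
      simpa using Equiv.sum_comp e.symm (fun i => wgt i • z i)
    have hcard : (Finset.univ.filter fun j => lam j ≠ 0).card ≤ n + 1 := by
      calc (Finset.univ.filter fun j => lam j ≠ 0).card
          ≤ (Finset.univ : Finset (Fin m)).card := Finset.card_filter_le _ _
        _ = m := by simp
        _ ≤ finrank ℝ (vectorSpan ℝ (Set.range z)) + 1 := haff.card_le_finrank_succ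
        _ ≤ n + 1 := by
            have h2 : finrank ℝ (vectorSpan ℝ (Set.range z)) ≤ finrank ℝ (Fin n → ℝ) :=
              Submodule.finrank_le _
            rw [Module.finrank_fin_fun] at h2
            omega
    have := main_ind hB hUconv hVU hs hSD hD0 hac K n m v hvmem lam h0 h1 hcard
    rw [hrep] at this
    exact this
  -- numerics
  have hB1 : (1 : ℝ) < B := by exact_mod_cast hB
  have hBR : (0 : ℝ) < B := by linarith
  set L := Nat.log B n with hL
  have hkap : kappa B n = (L : ℝ) + 1 + (n : ℝ) / (((B : ℝ) - 1) * (B : ℝ) ^ L) := by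
    unfold kappa
    have h1 : ⌊Real.logb B n⌋ = (L : ℤ) := by
      rw [Real.floor_logb_natCast (Nat.cast_nonneg n), Int.log_natCast]
    rw [h1, zpow_natCast]
    norm_num
  have hBL : (B : ℕ) ^ L ≤ n := Nat.pow_log_le_self B (by omega)
  have hnB : n < B ^ (L + 1) := Nat.lt_pow_succ_log_self (by omega) n
  have hCK : ∀ M : ℕ, (∑ k ∈ Finset.range (L + 1 + M), min 1 ((n : ℝ) / (B : ℝ) ^ k))
      ≤ ((L : ℝ) + 1) + (n : ℝ) / (((B : ℝ) - 1) * (B : ℝ) ^ L)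
        - (n : ℝ) / (((B : ℝ) - 1) * (B : ℝ) ^ (L + M)) := by
    intro M
    induction M with
    | zero =>
      have hb : ∑ k ∈ Finset.range (L + 1), min 1 ((n : ℝ) / (B : ℝ) ^ k)
          ≤ ((L : ℝ) + 1) := by
        calc ∑ k ∈ Finset.range (L + 1), min 1 ((n : ℝ) / (B : ℝ) ^ k)
            ≤ ∑ _k ∈ Finset.range (L + 1), (1 : ℝ) :=
              Finset.sum_le_sum fun k _ => min_le_left _ _
          _ = ((L : ℝ) + 1) := by simp
      simp only [Nat.add_zero]
      linarith
    | succ M IHM =>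
      have hsplit : ∑ k ∈ Finset.range (L + 1 + (M + 1)), min 1 ((n : ℝ) / (B : ℝ) ^ k)
          = (∑ k ∈ Finset.range (L + 1 + M), min 1 ((n : ℝ) / (B : ℝ) ^ k))
            + min 1 ((n : ℝ) / (B : ℝ) ^ (L + 1 + M)) := Finset.sum_range_succ _ _
      have hterm : min 1 ((n : ℝ) / (B : ℝ) ^ (L + 1 + M)) ≤ (n : ℝ) / (B : ℝ) ^ (L + 1 + M) :=
        min_le_right _ _
      have hBm : (0 : ℝ) < (B : ℝ) ^ (L + M) := by positivity
      have halg : (n : ℝ) / (B : ℝ) ^ (L + 1 + M) - (n : ℝ) / (((B : ℝ) - 1) * (B : ℝ) ^ (L + M))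
          = -((n : ℝ) / (((B : ℝ) - 1) * (B : ℝ) ^ (L + M + 1))) := by
        have e1 : (B : ℝ) ^ (L + 1 + M) = (B : ℝ) ^ (L + M) * B := by
          rw [← pow_succ]
          congr 1
          omega
        have e2 : (B : ℝ) ^ (L + M + 1) = (B : ℝ) ^ (L + M) * B := pow_succ _ _
        rw [e1, e2]
        have hB1' : (B : ℝ) - 1 ≠ 0 := by linarith
        field_simp
        ring
      have hfin : L + (M + 1) = L + M + 1 := by omega
      rw [hsplit, hfin]
      linarith
  have hDbound : D ≤ kappa B n := by
    by_contra hcon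
    push_neg at hcon
    set ε := (D - kappa B n) / 2 with hε
    have hεpos : 0 < ε := by rw [hε]; linarith
    obtain ⟨M, hM2⟩ := pow_unbounded_of_one_lt ((D * n) / ε) hB1
    have hK := hkey (L + 1 + M)
    rw [gfun_def] at hK
    have hCK' : (∑ k ∈ Finset.range (L + 1 + M), min 1 ((n : ℝ) / (B : ℝ) ^ k))
        ≤ kappa B n := by
      have h2 := hCK M
      have h3 : (0 : ℝ) ≤ (n : ℝ) / (((B : ℝ) - 1) * (B : ℝ) ^ (L + M)) := by
        apply div_nonneg (Nat.cast_nonneg n)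
        apply mul_nonneg (by linarith)
        positivity
      rw [hkap]
      linarith
    have hDterm : D * min 1 ((n : ℝ) / (B : ℝ) ^ (L + 1 + M)) ≤ ε := by
      have hp1 : (0 : ℝ) < (B : ℝ) ^ M := by positivity
      have hp2 : (0 : ℝ) < (B : ℝ) ^ (L + 1 + M) := by positivity
      calc D * min 1 ((n : ℝ) / (B : ℝ) ^ (L + 1 + M))
          ≤ D * ((n : ℝ) / (B : ℝ) ^ (L + 1 + M)) :=
            mul_le_mul_of_nonneg_left (min_le_right _ _) hD0
        _ ≤ D * ((n : ℝ) / (B : ℝ) ^ M) := by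
            apply mul_le_mul_of_nonneg_left ?_ hD0
            apply div_le_div_of_nonneg_left (Nat.cast_nonneg n) hp1
            exact pow_le_pow_right₀ (by linarith) (by omega)
        _ = (D * n) / (B : ℝ) ^ M := by ring
        _ ≤ ε := by
            rw [div_le_iff₀ hp1]
            have := (div_lt_iff₀ hεpos).1 hM2
            nlinarith
    have : D ≤ kappa B n + ε := by
      have : S ≤ s + (kappa B n + ε) := by linarith
      rw [hDdef]; linarith
    rw [hε] at this
    linarith
  rw [hDdef] at hDbound
  linarith
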